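/- ∫₀¹ (J₁(2t)/(t√(1−t²))) dt = (π/2)(J₀(1)² + J₁(1)²); more generally, for C > 0, (12C/π²) ∫₀¹ J₁(2t/C)/(t√(1−t²)) dt = (6/π)(J₀(1/C)² + J₁(1/C)²). -/

import Mathlib

open Real

/-- The Bessel function of the first kind of order 0, via its power series. -/
noncomputable def besselJ0 (x : ℝ) : ℝ :=
  ∑' m : ℕ, ((-1 : ℝ) ^ m / (Nat.factorial m * Nat.factorial m)) * (x / 2) ^ (2 * m)

/-- The Bessel function of the first kind of order 1, via its power series. -/
noncomputable def besselJ1 (x : ℝ) : ℝ :=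
  ∑' m : ℕ, ((-1 : ℝ) ^ m / (Nat.factorial m * Nat.factorial (m + 1))) * (x / 2) ^ (2 * m + 1)

open MeasureTheory Finset

noncomputable def J1c (m : ℕ) : ℝ := (-1 : ℝ) ^ m / (Nat.factorial m * Nat.factorial (m + 1))
noncomputable def J0c (m : ℕ) : ℝ := (-1 : ℝ) ^ m / (Nat.factorial m * Nat.factorial m)

lemma factpos (m : ℕ) : (0:ℝ) < Nat.factorial m := by exact_mod_cast Nat.factorial_pos m

lemma J0c_abs (m : ℕ) : |J0c m| = 1 / (Nat.factorial m * Nat.factorial m) := by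
  rw [J0c, abs_div, abs_pow, abs_neg, abs_one, one_pow]
  congr 1
  exact abs_of_pos (by positivity)

lemma J1c_abs (m : ℕ) : |J1c m| = 1 / (Nat.factorial m * Nat.factorial (m + 1)) := by
  rw [J1c, abs_div, abs_pow, abs_neg, abs_one, one_pow]
  congr 1
  exact abs_of_pos (by positivity)

lemma summable_J0_norm (x : ℝ) :
    Summable (fun m : ℕ => ‖J0c m * x ^ (2 * m)‖) := by
  have key : ∀ m : ℕ, ‖J0c m * x ^ (2 * m)‖ ≤ (x ^ 2) ^ m / Nat.factorial m := by
    intro m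
    have h1 : (1 : ℝ) ≤ Nat.factorial m := by exact_mod_cast (Nat.factorial_pos m)
    have hx : ‖J0c m * x ^ (2 * m)‖ = (x ^ 2) ^ m / (Nat.factorial m * Nat.factorial m) := by
      have hp : |x| ^ (2 * m) = (x ^ 2) ^ m := by rw [pow_mul, sq_abs]
      rw [norm_mul, Real.norm_eq_abs, Real.norm_eq_abs, J0c_abs, abs_pow, hp]
      ring
    rw [hx]
    apply div_le_div_of_nonneg_left (by positivity) (factpos m)
    nlinarith [factpos m]
  exact Summable.of_nonneg_of_le (fun m => norm_nonneg _) key (Real.summable_pow_div_factorial (x ^ 2))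

lemma summable_J1_norm (x : ℝ) :
    Summable (fun m : ℕ => ‖J1c m * x ^ (2 * m + 1)‖) := by
  have key : ∀ m : ℕ, ‖J1c m * x ^ (2 * m + 1)‖ ≤ |x| * ((x ^ 2) ^ m / Nat.factorial m) := by
    intro m
    have h1 : (1 : ℝ) ≤ Nat.factorial (m + 1) := by exact_mod_cast (Nat.factorial_pos (m + 1))
    have hx : ‖J1c m * x ^ (2 * m + 1)‖
        = |x| * ((x ^ 2) ^ m / (Nat.factorial m * Nat.factorial (m + 1))) := by
      have hp : |x| ^ (2 * m) = (x ^ 2) ^ m := by rw [pow_mul, sq_abs]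
      rw [norm_mul, Real.norm_eq_abs, Real.norm_eq_abs, J1c_abs, abs_pow, pow_succ, hp]
      ring
    rw [hx]
    apply mul_le_mul_of_nonneg_left _ (abs_nonneg x)
    apply div_le_div_of_nonneg_left (by positivity) (factpos m)
    nlinarith [factpos m, factpos (m + 1)]
  exact Summable.of_nonneg_of_le (fun m => norm_nonneg _) key
    ((Real.summable_pow_div_factorial (x ^ 2)).mul_left |x|)

lemma wallis (m : ℕ) : (∫ θ in (0:ℝ)..(π/2), Real.sin θ ^ (2 * m))
    = π / 2 * (Nat.factorial (2 * m)) / (4 ^ m * (Nat.factorial m : ℝ) ^ 2) := by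
  induction m with
  | zero => simp
  | succ n ih =>
    have h : 2 * (n + 1) = (2 * n) + 2 := by ring
    rw [h, integral_sin_pow]
    rw [ih]
    rw [Real.sin_zero, Real.cos_pi_div_two]
    have h2 : ((2 * n + 2).factorial : ℝ) = (2*n+2) * (2*n+1) * (Nat.factorial (2*n)) := by
      rw [show 2 * n + 2 = (2*n+1) + 1 from rfl, Nat.factorial_succ, Nat.factorial_succ]
      push_cast
      ring
    have h3 : ((Nat.factorial (n+1) : ℝ)) = (n+1) * Nat.factorial n := by
      rw [Nat.factorial_succ]; push_cast; ring
    rw [h2, h3]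
    have h4 : (0:ℝ) < Nat.factorial (2*n) := factpos _
    have h5 : (0:ℝ) < Nat.factorial n := factpos _
    have h6 : (0:ℝ) < (4:ℝ) ^ n := by positivity
    field_simp
    push_cast
    ring

lemma image_sin : Real.sin '' Set.Ioo 0 (π/2) = Set.Ioo 0 1 := by
  ext y
  constructor
  · rintro ⟨θ, ⟨h0, h1⟩, rfl⟩
    constructor
    · exact Real.sin_pos_of_pos_of_lt_pi h0 (h1.trans (by linarith [pi_pos]))
    · calc Real.sin θ < Real.sin (π/2) := by
            apply Real.strictMonoOn_sin ⟨by linarith [pi_pos], h1.le⟩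
              ⟨by linarith [pi_pos], le_refl _⟩ h1
          _ = 1 := Real.sin_pi_div_two
  · rintro ⟨h0, h1⟩
    refine ⟨Real.arcsin y, ⟨Real.arcsin_pos.mpr h0, Real.arcsin_lt_pi_div_two.mpr h1⟩,
      Real.sin_arcsin (by linarith) (by linarith)⟩

lemma subst_sin (g : ℝ → ℝ) :
    ∫ t in Set.Ioo (0:ℝ) 1, g t
      = ∫ θ in Set.Ioo (0:ℝ) (π/2), |Real.cos θ| * g (Real.sin θ) := by
  have hsub : Set.Ioo (0:ℝ) (π/2) ⊆ Set.Icc (-(π/2)) (π/2) := by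
    intro x hx
    exact ⟨by linarith [hx.1, pi_pos], hx.2.le⟩
  rw [← image_sin]
  rw [MeasureTheory.integral_image_eq_integral_abs_deriv_smul measurableSet_Ioo
    (fun x _ => (Real.hasDerivAt_sin x).hasDerivWithinAt)
    (Real.injOn_sin.mono hsub) g]
  simp [smul_eq_mul]

lemma besselJ1_series (x : ℝ) :
    besselJ1 x = ∑' m : ℕ, J1c m * (x / 2) ^ (2 * m + 1) := rfl

lemma besselJ1_div (a s : ℝ) (hs : s ≠ 0) :
    besselJ1 (2 * a * s) / s = ∑' m : ℕ, J1c m * a ^ (2 * m + 1) * s ^ (2 * m) := by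
  rw [besselJ1_series, ← tsum_div_const]
  apply tsum_congr
  intro m
  have h : 2 * a * s / 2 = a * s := by ring
  rw [h, mul_pow]
  field_simp
  ring

lemma vand0 (n : ℕ) :
    ∑ p ∈ Finset.HasAntidiagonal.antidiagonal n, (n.choose p.1) * (n.choose p.2) = (2*n).choose n := by
  rw [two_mul, Nat.add_choose_eq]

lemma vand1 (n : ℕ) :
    ∑ p ∈ Finset.HasAntidiagonal.antidiagonal n, (n+1).choose (p.1+1) * ((n+1).choose (p.2+1))
      = (2*n+2).choose n := by
  have hvd : ∑ p ∈ Finset.HasAntidiagonal.antidiagonal (n+2), (n+1).choose p.1 * ((n+1).choose p.2)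
      = (2*n+2).choose (n+2) := by
    rw [show 2*n+2 = (n+1) + (n+1) by ring, Nat.add_choose_eq]
  rw [Finset.Nat.sum_antidiagonal_eq_sum_range_succ_mk] at hvd ⊢
  have hsymm : (2*n+2).choose (n+2) = (2*n+2).choose n := by
    rw [← Nat.choose_symm (by omega : n + 2 ≤ 2*n+2)]
    congr 1
    omega
  rw [← hsymm, ← hvd]
  rw [Finset.sum_range_succ' _ (n+2), Finset.sum_range_succ _ (n+1)]
  have c0 : (n+1).choose (n+2) = 0 := Nat.choose_eq_zero_of_lt (by omega)
  simp only [Nat.sub_zero, c0, Nat.choose_zero_right, one_mul, mul_zero, mul_one, zero_add,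
    add_zero, Nat.add_sub_cancel, show n+1+1 = n+2 from rfl, zero_mul]
  apply Finset.sum_congr rfl
  intro k hk
  have hk' : k ≤ n := by simpa using Nat.lt_succ_iff.mp (Finset.mem_range.mp hk)
  congr 2
  omega

lemma S0_eq (a : ℝ) (n : ℕ) :
    ∑ p ∈ Finset.HasAntidiagonal.antidiagonal n, (J0c p.1 * (a/2)^(2*p.1)) * (J0c p.2 * (a/2)^(2*p.2))
      = (-1)^n * (a/2)^(2*n) * (((2*n).choose n : ℕ) : ℝ)
          / ((Nat.factorial n : ℝ) * Nat.factorial n) := by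
  have key : ∀ p ∈ Finset.HasAntidiagonal.antidiagonal n,
      (J0c p.1 * (a/2)^(2*p.1)) * (J0c p.2 * (a/2)^(2*p.2))
        = ((-1:ℝ)^n * (a/2)^(2*n) / ((Nat.factorial n : ℝ) * Nat.factorial n))
            * ((n.choose p.1 : ℝ) * (n.choose p.2 : ℝ)) := by
    rintro ⟨i, j⟩ hp
    have hij : i + j = n := Finset.HasAntidiagonal.mem_antidiagonal.mp hp
    subst hij
    have h1 : (Nat.factorial i : ℝ) ≠ 0 := (factpos i).ne'
    have h2 : (Nat.factorial j : ℝ) ≠ 0 := (factpos j).ne'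
    have h3 : (Nat.factorial (i+j) : ℝ) ≠ 0 := (factpos (i+j)).ne'
    have hci' := Nat.choose_mul_factorial_mul_factorial (Nat.le_add_right i j)
    rw [Nat.add_sub_cancel_left] at hci'
    have hcj' := Nat.choose_mul_factorial_mul_factorial (Nat.le_add_left j i)
    rw [Nat.add_sub_cancel] at hcj'
    have hci : ((i+j).choose i : ℝ) * Nat.factorial i * Nat.factorial j
        = Nat.factorial (i+j) := by exact_mod_cast hci'
    have hcj : ((i+j).choose j : ℝ) * Nat.factorial j * Nat.factorial i
        = Nat.factorial (i+j) := by exact_mod_cast hcj'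
    have hC1 : ((i+j).choose i : ℝ)
        = Nat.factorial (i+j) / (Nat.factorial i * Nat.factorial j) := by
      rw [eq_div_iff (by positivity)]
      linear_combination hci
    have hC2 : ((i+j).choose j : ℝ)
        = Nat.factorial (i+j) / (Nat.factorial j * Nat.factorial i) := by
      rw [eq_div_iff (by positivity)]
      linear_combination hcj
    simp only
    rw [J0c, J0c, hC1, hC2, mul_add 2 i j, pow_add, pow_add]
    field_simp
  rw [Finset.sum_congr rfl key, ← Finset.mul_sum]
  have hv : ∑ p ∈ Finset.HasAntidiagonal.antidiagonal n, ((n.choose p.1 : ℝ) * (n.choose p.2 : ℝ))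
      = (((2*n).choose n : ℕ) : ℝ) := by
    rw [← vand0 n]
    push_cast
    rfl
  rw [hv]
  ring

lemma S1_eq (a : ℝ) (n : ℕ) :
    ∑ p ∈ Finset.HasAntidiagonal.antidiagonal n, (J1c p.1 * (a/2)^(2*p.1+1)) * (J1c p.2 * (a/2)^(2*p.2+1))
      = (-1)^n * (a/2)^(2*n+2) * (((2*n+2).choose n : ℕ) : ℝ)
          / ((Nat.factorial (n+1) : ℝ) * Nat.factorial (n+1)) := by
  have key : ∀ p ∈ Finset.HasAntidiagonal.antidiagonal n,
      (J1c p.1 * (a/2)^(2*p.1+1)) * (J1c p.2 * (a/2)^(2*p.2+1))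
        = ((-1:ℝ)^n * (a/2)^(2*n+2) / ((Nat.factorial (n+1) : ℝ) * Nat.factorial (n+1)))
            * (((n+1).choose (p.1+1) : ℝ) * ((n+1).choose (p.2+1) : ℝ)) := by
    rintro ⟨i, j⟩ hp
    have hij : i + j = n := Finset.HasAntidiagonal.mem_antidiagonal.mp hp
    subst hij
    have h1 : (Nat.factorial i : ℝ) ≠ 0 := (factpos i).ne'
    have h1' : (Nat.factorial (i+1) : ℝ) ≠ 0 := (factpos (i+1)).ne'
    have h2 : (Nat.factorial j : ℝ) ≠ 0 := (factpos j).ne'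
    have h2' : (Nat.factorial (j+1) : ℝ) ≠ 0 := (factpos (j+1)).ne'
    have h3 : (Nat.factorial (i+j+1) : ℝ) ≠ 0 := (factpos (i+j+1)).ne'
    have hci' := Nat.choose_mul_factorial_mul_factorial (show i+1 ≤ i+j+1 by omega)
    rw [show i+j+1 - (i+1) = j by omega] at hci'
    have hcj' := Nat.choose_mul_factorial_mul_factorial (show j+1 ≤ i+j+1 by omega)
    rw [show i+j+1 - (j+1) = i by omega] at hcj'
    have hci : ((i+j+1).choose (i+1) : ℝ) * Nat.factorial (i+1) * Nat.factorial j
        = Nat.factorial (i+j+1) := by exact_mod_cast hci'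
    have hcj : ((i+j+1).choose (j+1) : ℝ) * Nat.factorial (j+1) * Nat.factorial i
        = Nat.factorial (i+j+1) := by exact_mod_cast hcj'
    have hC1 : ((i+j+1).choose (i+1) : ℝ)
        = Nat.factorial (i+j+1) / (Nat.factorial (i+1) * Nat.factorial j) := by
      rw [eq_div_iff (by positivity)]
      linear_combination hci
    have hC2 : ((i+j+1).choose (j+1) : ℝ)
        = Nat.factorial (i+j+1) / (Nat.factorial (j+1) * Nat.factorial i) := by
      rw [eq_div_iff (by positivity)]
      linear_combination hcj
    simp only
    rw [J1c, J1c, show (i:ℕ)+j+1 = (i+j)+1 from rfl] at *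
    rw [hC1, hC2]
    have hx : (a/2)^(2*(i+j)+2) = (a/2)^(2*i+1) * (a/2)^(2*j+1) := by
      rw [← pow_add]
      congr 1
      ring
    rw [hx, pow_add ((-1:ℝ)) i j]
    field_simp
  rw [Finset.sum_congr rfl key, ← Finset.mul_sum]
  have hv : ∑ p ∈ Finset.HasAntidiagonal.antidiagonal n, (((n+1).choose (p.1+1) : ℝ) * ((n+1).choose (p.2+1) : ℝ))
      = (((2*n+2).choose n : ℕ) : ℝ) := by
    rw [← vand1 n]
    push_cast
    rfl
  rw [hv]
  ring

noncomputable def Afun (a : ℝ) (n : ℕ) : ℝ :=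
  (-1)^n * (a/2)^(2*n) * (((2*n).choose n : ℕ) : ℝ)
    / ((Nat.factorial n : ℝ) * Nat.factorial n)

noncomputable def Bfun (a : ℝ) (n : ℕ) : ℝ :=
  (-1)^n * (a/2)^(2*n+2) * (((2*n+2).choose n : ℕ) : ℝ)
    / ((Nat.factorial (n+1) : ℝ) * Nat.factorial (n+1))

noncomputable def Tfun (a : ℝ) : ℕ → ℝ := fun n =>
  match n with
  | 0 => 0
  | (m+1) => Bfun a m

lemma Tfun_zero (a : ℝ) : Tfun a 0 = 0 := rfl
lemma Tfun_succ (a : ℝ) (m : ℕ) : Tfun a (m+1) = Bfun a m := rfl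

lemma catalan_key (m : ℕ) : ((2*(m+1)).factorial : ℝ)
    = ((((2*(m+1)).choose (m+1) : ℕ) : ℝ) - (((2*m+2).choose m : ℕ) : ℝ))
        * Nat.factorial (m+1) * Nat.factorial (m+2) := by
  rw [show 2*m+2 = 2*(m+1) by ring]
  have k1' := Nat.choose_mul_factorial_mul_factorial (show m+1 ≤ 2*(m+1) by omega)
  rw [show 2*(m+1) - (m+1) = m+1 by omega] at k1'
  have k1 : ((2*(m+1)).choose (m+1) : ℝ) * Nat.factorial (m+1) * Nat.factorial (m+1)
      = (2*(m+1)).factorial := by exact_mod_cast k1'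
  have k2' := Nat.choose_succ_right_eq (2*(m+1)) m
  rw [show 2*(m+1) - m = m+2 by omega] at k2'
  have k2 : ((2*(m+1)).choose (m+1) : ℝ) * ((m:ℝ)+1) = ((2*(m+1)).choose m : ℝ) * ((m:ℝ)+2) := by
    exact_mod_cast k2'
  have hfs : (Nat.factorial (m+2) : ℝ) = ((m:ℝ)+2) * Nat.factorial (m+1) := by
    rw [Nat.factorial_succ]; push_cast; ring
  rw [hfs]
  linear_combination (-1 : ℝ) * k1 - (Nat.factorial (m+1):ℝ)^2 * k2

lemma per0 (a : ℝ) :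
    J1c 0 * a^(2*0+1) * (π/2 * ((2*0).factorial : ℝ) / (4^0 * (Nat.factorial 0 : ℝ)^2))
      = π * a / 2 * (Afun a 0 + Tfun a 0) := by
  simp [J1c, Afun, Tfun_zero]
  ring

lemma perS (a : ℝ) (m : ℕ) :
    J1c (m+1) * a^(2*(m+1)+1)
        * (π/2 * ((2*(m+1)).factorial : ℝ) / (4^(m+1) * (Nat.factorial (m+1) : ℝ)^2))
      = π * a / 2 * (Afun a (m+1) + Bfun a m) := by
  have key := catalan_key m
  have hf1 : (Nat.factorial (m+1) : ℝ) ≠ 0 := (factpos _).ne'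
  have hf2 : (Nat.factorial (m+2) : ℝ) ≠ 0 := (factpos _).ne'
  have hfs : (Nat.factorial (m+2) : ℝ) = (m+2) * Nat.factorial (m+1) := by
    rw [Nat.factorial_succ]; push_cast; ring
  have hpow : ((a/2) : ℝ)^(2*(m+1)) = a^(2*(m+1)) / 4^(m+1) := by
    rw [div_pow]
    congr 1
    rw [pow_mul]
    norm_num
  have hpow2 : ((a/2) : ℝ)^(2*m+2) = a^(2*(m+1)) / 4^(m+1) := by
    rw [show 2*m+2 = 2*(m+1) by ring]
    exact hpow
  have hch : (((2*m+2).choose m : ℕ) : ℝ) = (((2*(m+1)).choose (m+1) : ℕ) : ℝ)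
      - ((2*(m+1)).factorial : ℝ) / (Nat.factorial (m+1) * Nat.factorial (m+2)) := by
    rw [eq_sub_iff_add_eq, ← eq_sub_iff_add_eq', div_eq_iff (by positivity)]
    linear_combination key
  rw [J1c, Afun, Bfun, hpow, hpow2, hch]
  have h4 : ((4:ℝ))^(m+1) ≠ 0 := by positivity
  field_simp
  ring


lemma lhs_eq (a : ℝ) :
    (∫ t in (0:ℝ)..1, besselJ1 (2*a*t) / (t * Real.sqrt (1 - t^2)))
    = ∑' m : ℕ, J1c m * a ^ (2*m+1)
        * (π / 2 * (Nat.factorial (2*m)) / (4 ^ m * (Nat.factorial m : ℝ) ^ 2)) := by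
  rw [intervalIntegral.integral_of_le (by norm_num : (0:ℝ) ≤ 1),
    MeasureTheory.integral_Ioc_eq_integral_Ioo,
    subst_sin (fun t => besselJ1 (2*a*t) / (t * Real.sqrt (1 - t^2)))]
  have step : Set.EqOn
      (fun θ => |Real.cos θ| * (besselJ1 (2*a*Real.sin θ)
        / (Real.sin θ * Real.sqrt (1 - Real.sin θ^2))))
      (fun θ => ∑' m : ℕ, J1c m * a ^ (2*m+1) * Real.sin θ ^ (2*m))
      (Set.Ioo (0:ℝ) (π/2)) := by
    intro θ hθ
    have hθ1 : θ < π := hθ.2.trans (by linarith [pi_pos])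
    have hcos : 0 < Real.cos θ := Real.cos_pos_of_mem_Ioo
      ⟨by linarith [hθ.1, pi_pos], hθ.2⟩
    have hsin : 0 < Real.sin θ := Real.sin_pos_of_pos_of_lt_pi hθ.1 hθ1
    have hsq : Real.sqrt (1 - Real.sin θ^2) = Real.cos θ := by
      rw [show 1 - Real.sin θ^2 = Real.cos θ^2 by nlinarith [Real.sin_sq_add_cos_sq θ],
        Real.sqrt_sq hcos.le]
    simp only
    rw [hsq, abs_of_pos hcos, ← besselJ1_div a (Real.sin θ) hsin.ne']
    field_simp
  rw [MeasureTheory.setIntegral_congr_fun measurableSet_Ioo step]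
  have hint : ∀ m : ℕ, MeasureTheory.Integrable
      (fun θ => J1c m * a ^ (2*m+1) * Real.sin θ ^ (2*m))
      (MeasureTheory.volume.restrict (Set.Ioo (0:ℝ) (π/2))) := by
    intro m
    have hc : Continuous fun θ : ℝ => J1c m * a ^ (2*m+1) * Real.sin θ ^ (2*m) := by
      fun_prop
    exact (hc.integrableOn_Icc (a := 0) (b := π/2)).mono_set Set.Ioo_subset_Icc_self
  have hvol : MeasureTheory.volume (Set.Ioo (0:ℝ) (π/2)) < ⊤ := by
    rw [Real.volume_Ioo]; exact ENNReal.ofReal_lt_top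
  have hbd : ∀ m : ℕ, (∫ θ in Set.Ioo (0:ℝ) (π/2),
      ‖J1c m * a ^ (2*m+1) * Real.sin θ ^ (2*m)‖)
      ≤ ‖J1c m * a ^ (2*m+1)‖ * (π/2) := by
    intro m
    have hC : ∀ θ ∈ Set.Ioo (0:ℝ) (π/2),
        ‖‖J1c m * a ^ (2*m+1) * Real.sin θ ^ (2*m)‖‖ ≤ ‖J1c m * a ^ (2*m+1)‖ := by
      intro θ _
      rw [norm_norm, norm_mul]
      have hle : ‖Real.sin θ ^ (2*m)‖ ≤ 1 := by
        rw [norm_pow]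
        apply pow_le_one₀ (norm_nonneg _)
        rw [Real.norm_eq_abs]
        exact Real.abs_sin_le_one θ
      nlinarith [norm_nonneg (J1c m * a ^ (2*m+1)), norm_nonneg (Real.sin θ ^ (2*m))]
    have hb := MeasureTheory.norm_setIntegral_le_of_norm_le_const hvol hC
    rw [Real.norm_of_nonneg (MeasureTheory.integral_nonneg (fun θ => norm_nonneg _))] at hb
    refine hb.trans ?_
    rw [MeasureTheory.measureReal_def, Real.volume_Ioo, show π/2 - 0 = π/2 by ring,
      ENNReal.toReal_ofReal (by linarith [pi_pos] : (0:ℝ) ≤ π/2)]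
  have hsum : Summable (fun m : ℕ => ∫ θ in Set.Ioo (0:ℝ) (π/2),
      ‖J1c m * a ^ (2*m+1) * Real.sin θ ^ (2*m)‖) :=
    Summable.of_nonneg_of_le
      (fun m => MeasureTheory.integral_nonneg (fun θ => norm_nonneg _)) hbd
      ((summable_J1_norm a).mul_right (π/2))
  rw [← MeasureTheory.integral_tsum_of_summable_integral_norm hint hsum]
  apply tsum_congr
  intro m
  rw [MeasureTheory.integral_const_mul]
  congr 1
  rw [← MeasureTheory.integral_Ioc_eq_integral_Ioo,
    ← intervalIntegral.integral_of_le (by linarith [pi_pos] : (0:ℝ) ≤ π/2)]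
  exact wallis m


lemma master (a : ℝ) :
    (∫ t in (0:ℝ)..1, besselJ1 (2*a*t) / (t * Real.sqrt (1 - t^2)))
      = π * a / 2 * (besselJ0 a ^ 2 + besselJ1 a ^ 2) := by
  rw [lhs_eq a]
  have hs0 : Summable fun m : ℕ => ‖J0c m * (a/2)^(2*m)‖ := summable_J0_norm (a/2)
  have hs1 : Summable fun m : ℕ => ‖J1c m * (a/2)^(2*m+1)‖ := summable_J1_norm (a/2)
  have hJ0sq : besselJ0 a ^ 2 = ∑' n : ℕ, Afun a n := by
    rw [show besselJ0 a = ∑' m : ℕ, J0c m * (a/2)^(2*m) from rfl, sq,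
      tsum_mul_tsum_eq_tsum_sum_antidiagonal_of_summable_norm hs0 hs0]
    exact tsum_congr (fun n => S0_eq a n)
  have hJ1sq : besselJ1 a ^ 2 = ∑' n : ℕ, Bfun a n := by
    rw [show besselJ1 a = ∑' m : ℕ, J1c m * (a/2)^(2*m+1) from rfl, sq,
      tsum_mul_tsum_eq_tsum_sum_antidiagonal_of_summable_norm hs1 hs1]
    exact tsum_congr (fun n => S1_eq a n)
  have sumA : Summable (Afun a) :=
    ((summable_norm_sum_mul_antidiagonal_of_summable_norm hs0 hs0).of_norm).congr
      (fun n => S0_eq a n)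
  have sumB : Summable (Bfun a) :=
    ((summable_norm_sum_mul_antidiagonal_of_summable_norm hs1 hs1).of_norm).congr
      (fun n => S1_eq a n)
  have sumT : Summable (Tfun a) := by
    rw [← summable_nat_add_iff 1]
    exact sumB
  have hT0 : ∑' n : ℕ, Tfun a n = ∑' n : ℕ, Bfun a n := by
    rw [Summable.tsum_eq_zero_add sumT, Tfun_zero, zero_add]
    exact tsum_congr (fun n => Tfun_succ a n)
  rw [hJ0sq, hJ1sq, ← hT0, ← Summable.tsum_add sumA sumT, ← tsum_mul_left]
  apply tsum_congr
  intro n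
  cases n with
  | zero => exact per0 a
  | succ m =>
    rw [Tfun_succ]
    exact perS a m

/-- `∫₀¹ J₁(2t)/(t√(1−t²)) dt = (π/2)(J₀(1)² + J₁(1)²)`, and more generally for `C > 0`,
`(12C/π²) ∫₀¹ J₁(2t/C)/(t√(1−t²)) dt = (6/π)(J₀(1/C)² + J₁(1/C)²)`. -/
theorem integral_besselJ1_eq :
    (∫ t in (0 : ℝ)..1, besselJ1 (2 * t) / (t * Real.sqrt (1 - t ^ 2))) =
      (Real.pi / 2) * (besselJ0 1 ^ 2 + besselJ1 1 ^ 2) ∧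
    ∀ C : ℝ, 0 < C →
      (12 * C / Real.pi ^ 2) *
          ∫ t in (0 : ℝ)..1, besselJ1 (2 * t / C) / (t * Real.sqrt (1 - t ^ 2)) =
        (6 / Real.pi) * (besselJ0 (1 / C) ^ 2 + besselJ1 (1 / C) ^ 2) := by
  constructor
  · have h := master 1
    have he : (∫ t in (0:ℝ)..1, besselJ1 (2*1*t) / (t * Real.sqrt (1 - t^2)))
        = ∫ t in (0:ℝ)..1, besselJ1 (2*t) / (t * Real.sqrt (1 - t^2)) := by
      apply intervalIntegral.integral_congr
      intro t _
      norm_num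
    rw [he] at h
    rw [h]
    ring
  · intro C hC
    have h := master (1/C)
    have he : (∫ t in (0:ℝ)..1, besselJ1 (2*(1/C)*t) / (t * Real.sqrt (1 - t^2)))
        = ∫ t in (0:ℝ)..1, besselJ1 (2*t/C) / (t * Real.sqrt (1 - t^2)) := by
      apply intervalIntegral.integral_congr
      intro t _
      simp only
      rw [show 2*(1/C)*t = 2*t/C by field_simp]
    rw [he] at h
    rw [h]
    have hpi : π ≠ 0 := Real.pi_ne_zero
    field_simp
    ring
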